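/- arXiv:1411.4159 — 2 statements merged into one kernel-verified Lean document; each statement's English description precedes it below -/
import Mathlib

section
/- Let R be a ring with identity such that APOG(R) ≠ ∅. Then R is a left and right Artinian ring if and only if the vertex set of APOG(R) satisfies the descending chain condition both on its elements that are left ideals of R and on its elements that are right ideals of R. -/
open scoped Pointwise

/-- `I` is a left ideal of the ring `R`: an additive subgroup with `R·I ⊆ I`. -/
def IsLeftIdeal (R : Type*) [Ring R] (I : AddSubgroup R) : Prop :=
  ∀ r : R, ∀ x ∈ I, r * x ∈ I

/-- `I` is a right ideal of the ring `R`: an additive subgroup with `I·R ⊆ I`. -/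
def IsRightIdeal (R : Type*) [Ring R] (I : AddSubgroup R) : Prop :=
  ∀ r : R, ∀ x ∈ I, x * r ∈ I

/-- `I` is a one-sided (left or right) ideal of `R`. -/
def IsOneSidedIdeal (R : Type*) [Ring R] (I : AddSubgroup R) : Prop :=
  IsLeftIdeal R I ∨ IsRightIdeal R I

/-- `IPO(R)`: the set of all products `I*J` of two one-sided ideals of `R`.
Here `I * J` is the additive subgroup generated by `{a*b : a ∈ I, b ∈ J}`
(the pointwise product of additive subgroups). -/
def IPO (R : Type*) [Ring R] : Set (AddSubgroup R) :=
  {A | ∃ I J : AddSubgroup R, IsOneSidedIdeal R I ∧ IsOneSidedIdeal R J ∧ A = I * J}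

/-- `A` is a vertex of `APOG(R) = Γ(IPO(R))`: a nonzero element of `IPO(R)` that is a
one-sided zero-divisor of the semigroup `IPO(R)`. -/
def APOGVertex (R : Type*) [Ring R] (A : AddSubgroup R) : Prop :=
  A ∈ IPO R ∧ A ≠ ⊥ ∧ ∃ B ∈ IPO R, B ≠ ⊥ ∧ (A * B = ⊥ ∨ B * A = ⊥)

/-- The directed edge `A → B` of `APOG(R)`: both are vertices, `A ≠ B` and `A*B = 0`. -/
def APOGEdge (R : Type*) [Ring R] (A B : AddSubgroup R) : Prop :=
  APOGVertex R A ∧ APOGVertex R B ∧ A ≠ B ∧ A * B = ⊥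

/-- A family `T` of additive subgroups satisfies the descending chain condition. -/
def DCCOn (R : Type*) [Ring R] (T : Set (AddSubgroup R)) : Prop :=
  ∀ f : ℕ → AddSubgroup R, (∀ n, f n ∈ T) → (∀ n, f (n + 1) ≤ f n) →
    ∃ N, ∀ n, N ≤ n → f n = f N

/-- A family `T` of additive subgroups satisfies the ascending chain condition. -/
def ACCOn (R : Type*) [Ring R] (T : Set (AddSubgroup R)) : Prop :=
  ∀ f : ℕ → AddSubgroup R, (∀ n, f n ∈ T) → (∀ n, f n ≤ f (n + 1)) →
    ∃ N, ∀ n, N ≤ n → f n = f N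

section Helpers

variable {R : Type*} [Ring R]

theorem my_mul_le {M N P : AddSubgroup R} :
    M * N ≤ P ↔ ∀ m ∈ M, ∀ n ∈ N, m * n ∈ P := by
  rw [← AddSubgroup.toAddSubmonoid_le, AddSubgroup.mul_toAddSubmonoid]
  exact AddSubmonoid.mul_le

theorem my_mul_mem_mul {M N : AddSubgroup R} {m n : R} (hm : m ∈ M) (hn : n ∈ N) :
    m * n ∈ M * N := by
  show m * n ∈ (M * N).toAddSubmonoid
  rw [AddSubgroup.mul_toAddSubmonoid]
  exact AddSubmonoid.mul_mem_mul hm hn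

theorem mem_rker {z x : R} :
    x ∈ AddSubgroup.comap (AddMonoidHom.mulRight z) (⊥ : AddSubgroup R) ↔ x * z = 0 := by
  rw [AddSubgroup.mem_comap, AddSubgroup.mem_bot]; exact Iff.rfl

theorem mem_lker {z x : R} :
    x ∈ AddSubgroup.comap (AddMonoidHom.mulLeft z) (⊥ : AddSubgroup R) ↔ z * x = 0 := by
  rw [AddSubgroup.mem_comap, AddSubgroup.mem_bot]; exact Iff.rfl

theorem isLeftIdeal_top : IsLeftIdeal R ⊤ := fun _ _ _ => trivial

theorem isRightIdeal_top : IsRightIdeal R ⊤ := fun _ _ _ => trivial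

theorem leftIdeal_mem_IPO {L : AddSubgroup R} (h : IsLeftIdeal R L) : L ∈ IPO R := by
  refine ⟨⊤, L, Or.inl isLeftIdeal_top, Or.inl h, le_antisymm ?_ ?_⟩
  · intro x hx
    simpa using my_mul_mem_mul (AddSubgroup.mem_top 1) hx
  · exact my_mul_le.2 fun r _ x hx => h r x hx

theorem rightIdeal_mem_IPO {L : AddSubgroup R} (h : IsRightIdeal R L) : L ∈ IPO R := by
  refine ⟨L, ⊤, Or.inr h, Or.inr isRightIdeal_top, le_antisymm ?_ ?_⟩
  · intro x hx
    simpa using my_mul_mem_mul hx (AddSubgroup.mem_top 1)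
  · exact my_mul_le.2 fun x hx r _ => h r x hx

/-- DCC on a set `T` of additive subgroups extends to chains whose terms are
in `T` or are trivial. -/
theorem dccOn_with_bot {T : Set (AddSubgroup R)} (hT : DCCOn R T)
    (f : ℕ → AddSubgroup R) (hf : ∀ n, f n ∈ T ∨ f n = ⊥)
    (hdesc : ∀ n, f (n + 1) ≤ f n) : ∃ N, ∀ n, N ≤ n → f n = f N := by
  have hanti : Antitone f := antitone_nat_of_succ_le hdesc
  by_cases hb : ∃ m, f m = ⊥
  · obtain ⟨m, hm⟩ := hb
    refine ⟨m, fun n hn => ?_⟩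
    have h1 : f n ≤ f m := hanti hn
    rw [hm] at h1 ⊢
    exact le_bot_iff.mp h1
  · push_neg at hb
    exact hT f (fun n => (hf n).resolve_right (hb n)) hdesc

theorem exists_ne_zero_of_ne_bot {L : AddSubgroup R} (h : L ≠ ⊥) :
    ∃ x ∈ L, x ≠ 0 := by
  by_contra hc
  push_neg at hc
  exact h (AddSubgroup.eq_bot_iff_forall L |>.2 hc)

/-- The key lemma for the left-ideal side: if some nonzero `z₀` annihilates a nonzero
`Y ∈ IPO R` on the left, then DCC on vertex left ideals gives DCC on all left ideals. -/
theorem left_dcc_of_vertex_dcc {z₀ : R} (hz : z₀ ≠ 0)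
    {Y : AddSubgroup R} (hY : Y ∈ IPO R) (hYb : Y ≠ ⊥)
    (hzY : ∀ y ∈ Y, z₀ * y = 0)
    (h : DCCOn R {A | APOGVertex R A ∧ IsLeftIdeal R A}) :
    DCCOn R {J | IsLeftIdeal R J} := by
  intro L hL hdesc
  have hanti : Antitone L := antitone_nat_of_succ_le hdesc
  -- the right ideal z₀R
  set B : AddSubgroup R := AddSubgroup.map (AddMonoidHom.mulLeft z₀) ⊤ with hB
  have hBmem : ∀ x : R, z₀ * x ∈ B := fun x =>
    AddSubgroup.mem_map_of_mem _ (AddSubgroup.mem_top x)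
  have hBright : IsRightIdeal R B := by
    rintro r x hx
    obtain ⟨s, -, rfl⟩ := AddSubgroup.mem_map.mp hx
    show AddMonoidHom.mulLeft z₀ s * r ∈ B
    have : AddMonoidHom.mulLeft z₀ s * r = z₀ * (s * r) := mul_assoc _ _ _
    rw [this]; exact hBmem _
  have hBipo : B ∈ IPO R := rightIdeal_mem_IPO hBright
  have hBne : B ≠ ⊥ := by
    intro hc
    have : z₀ ∈ B := by simpa using hBmem 1
    rw [hc, AddSubgroup.mem_bot] at this
    exact hz this
  -- the two auxiliary chains
  set D : ℕ → AddSubgroup R := fun n => AddSubgroup.map (AddMonoidHom.mulRight z₀) (L n)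
    with hD
  set E : ℕ → AddSubgroup R := fun n =>
    L n ⊓ AddSubgroup.comap (AddMonoidHom.mulRight z₀) ⊥ with hE
  have hDdesc : ∀ n, D (n + 1) ≤ D n := fun n =>
    AddSubgroup.map_mono (hdesc n)
  have hEdesc : ∀ n, E (n + 1) ≤ E n := fun n =>
    inf_le_inf_right _ (hdesc n)
  have hDleft : ∀ n, IsLeftIdeal R (D n) := by
    intro n r x hx
    obtain ⟨u, hu, rfl⟩ := AddSubgroup.mem_map.mp hx
    show r * (u * z₀) ∈ D n
    rw [← mul_assoc]
    exact AddSubgroup.mem_map_of_mem _ (hL n r u hu)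
  have hEleft : ∀ n, IsLeftIdeal R (E n) := by
    intro n r x hx
    obtain ⟨hx1, hx2'⟩ := AddSubgroup.mem_inf.mp hx
    have hx2 : x * z₀ = 0 := mem_rker.mp hx2'
    refine AddSubgroup.mem_inf.mpr ⟨hL n r x hx1, mem_rker.mpr ?_⟩
    rw [mul_assoc, hx2, mul_zero]
  have hDmem : ∀ n, D n ∈ {A | APOGVertex R A ∧ IsLeftIdeal R A} ∨ D n = ⊥ := by
    intro n
    by_cases hc : D n = ⊥
    · exact Or.inr hc
    · refine Or.inl ⟨⟨leftIdeal_mem_IPO (hDleft n), hc, Y, hY, hYb, Or.inl ?_⟩, hDleft n⟩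
      refine le_bot_iff.mp (my_mul_le.2 fun d hd y hy => ?_)
      obtain ⟨u, -, rfl⟩ := AddSubgroup.mem_map.mp hd
      show u * z₀ * y ∈ (⊥ : AddSubgroup R)
      rw [mul_assoc, hzY y hy, mul_zero]
      exact zero_mem _
  have hEmem : ∀ n, E n ∈ {A | APOGVertex R A ∧ IsLeftIdeal R A} ∨ E n = ⊥ := by
    intro n
    by_cases hc : E n = ⊥
    · exact Or.inr hc
    · refine Or.inl ⟨⟨leftIdeal_mem_IPO (hEleft n), hc, B, hBipo, hBne, Or.inl ?_⟩, hEleft n⟩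
      refine le_bot_iff.mp (my_mul_le.2 fun v hv b hb => ?_)
      obtain ⟨s, -, rfl⟩ := AddSubgroup.mem_map.mp hb
      have hv2 : v * z₀ = 0 := mem_rker.mp (AddSubgroup.mem_inf.mp hv).2
      show v * (z₀ * s) ∈ (⊥ : AddSubgroup R)
      rw [← mul_assoc, hv2, zero_mul]
      exact zero_mem _
  obtain ⟨N₁, hN₁⟩ := dccOn_with_bot h D hDmem hDdesc
  obtain ⟨N₂, hN₂⟩ := dccOn_with_bot h E hEmem hEdesc
  refine ⟨max N₁ N₂, fun n hn => ?_⟩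
  have hn1 : N₁ ≤ n := le_trans (le_max_left _ _) hn
  have hn2 : N₂ ≤ n := le_trans (le_max_right _ _) hn
  have hDeq : D n = D (max N₁ N₂) := by
    rw [hN₁ n hn1, hN₁ (max N₁ N₂) (le_max_left _ _)]
  have hEeq : E n = E (max N₁ N₂) := by
    rw [hN₂ n hn2, hN₂ (max N₁ N₂) (le_max_right _ _)]
  refine le_antisymm (hanti hn) ?_
  intro x hx
  have hxz : x * z₀ ∈ D n := by
    rw [hDeq]
    exact AddSubgroup.mem_map_of_mem _ hx
  obtain ⟨u, hu, huz⟩ := AddSubgroup.mem_map.mp hxz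
  have huz' : u * z₀ = x * z₀ := huz
  have hxu : x - u ∈ E n := by
    rw [hEeq]
    refine AddSubgroup.mem_inf.mpr ⟨sub_mem hx (hanti hn hu), mem_rker.mpr ?_⟩
    rw [sub_mul, huz', sub_self]
  have : (x - u) + u ∈ L n := add_mem (AddSubgroup.mem_inf.mp hxu).1 hu
  simpa using this

/-- The key lemma for the right-ideal side. -/
theorem right_dcc_of_vertex_dcc {w₀ : R} (hw : w₀ ≠ 0)
    {X : AddSubgroup R} (hX : X ∈ IPO R) (hXb : X ≠ ⊥)
    (hXw : ∀ x ∈ X, x * w₀ = 0)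
    (h : DCCOn R {A | APOGVertex R A ∧ IsRightIdeal R A}) :
    DCCOn R {J | IsRightIdeal R J} := by
  intro L hL hdesc
  have hanti : Antitone L := antitone_nat_of_succ_le hdesc
  -- the left ideal Rw₀
  set B : AddSubgroup R := AddSubgroup.map (AddMonoidHom.mulRight w₀) ⊤ with hB
  have hBmem : ∀ x : R, x * w₀ ∈ B := fun x =>
    AddSubgroup.mem_map_of_mem _ (AddSubgroup.mem_top x)
  have hBleft : IsLeftIdeal R B := by
    rintro r x hx
    obtain ⟨s, -, rfl⟩ := AddSubgroup.mem_map.mp hx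
    show r * AddMonoidHom.mulRight w₀ s ∈ B
    have : r * AddMonoidHom.mulRight w₀ s = (r * s) * w₀ := (mul_assoc _ _ _).symm
    rw [this]; exact hBmem _
  have hBipo : B ∈ IPO R := leftIdeal_mem_IPO hBleft
  have hBne : B ≠ ⊥ := by
    intro hc
    have : w₀ ∈ B := by simpa using hBmem 1
    rw [hc, AddSubgroup.mem_bot] at this
    exact hw this
  set D : ℕ → AddSubgroup R := fun n => AddSubgroup.map (AddMonoidHom.mulLeft w₀) (L n)
    with hD
  set E : ℕ → AddSubgroup R := fun n =>
    L n ⊓ AddSubgroup.comap (AddMonoidHom.mulLeft w₀) ⊥ with hE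
  have hDdesc : ∀ n, D (n + 1) ≤ D n := fun n =>
    AddSubgroup.map_mono (hdesc n)
  have hEdesc : ∀ n, E (n + 1) ≤ E n := fun n =>
    inf_le_inf_right _ (hdesc n)
  have hDright : ∀ n, IsRightIdeal R (D n) := by
    intro n r x hx
    obtain ⟨u, hu, rfl⟩ := AddSubgroup.mem_map.mp hx
    show (w₀ * u) * r ∈ D n
    rw [mul_assoc]
    exact AddSubgroup.mem_map_of_mem _ (hL n r u hu)
  have hEright : ∀ n, IsRightIdeal R (E n) := by
    intro n r x hx
    obtain ⟨hx1, hx2'⟩ := AddSubgroup.mem_inf.mp hx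
    have hx2 : w₀ * x = 0 := mem_lker.mp hx2'
    refine AddSubgroup.mem_inf.mpr ⟨hL n r x hx1, mem_lker.mpr ?_⟩
    rw [← mul_assoc, hx2, zero_mul]
  have hDmem : ∀ n, D n ∈ {A | APOGVertex R A ∧ IsRightIdeal R A} ∨ D n = ⊥ := by
    intro n
    by_cases hc : D n = ⊥
    · exact Or.inr hc
    · refine Or.inl ⟨⟨rightIdeal_mem_IPO (hDright n), hc, X, hX, hXb, Or.inr ?_⟩, hDright n⟩
      refine le_bot_iff.mp (my_mul_le.2 fun x hx d hd => ?_)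
      obtain ⟨u, -, rfl⟩ := AddSubgroup.mem_map.mp hd
      show x * (w₀ * u) ∈ (⊥ : AddSubgroup R)
      rw [← mul_assoc, hXw x hx, zero_mul]
      exact zero_mem _
  have hEmem : ∀ n, E n ∈ {A | APOGVertex R A ∧ IsRightIdeal R A} ∨ E n = ⊥ := by
    intro n
    by_cases hc : E n = ⊥
    · exact Or.inr hc
    · refine Or.inl ⟨⟨rightIdeal_mem_IPO (hEright n), hc, B, hBipo, hBne, Or.inr ?_⟩, hEright n⟩
      refine le_bot_iff.mp (my_mul_le.2 fun b hb v hv => ?_)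
      obtain ⟨s, -, rfl⟩ := AddSubgroup.mem_map.mp hb
      have hv2 : w₀ * v = 0 := mem_lker.mp (AddSubgroup.mem_inf.mp hv).2
      show (s * w₀) * v ∈ (⊥ : AddSubgroup R)
      rw [mul_assoc, hv2, mul_zero]
      exact zero_mem _
  obtain ⟨N₁, hN₁⟩ := dccOn_with_bot h D hDmem hDdesc
  obtain ⟨N₂, hN₂⟩ := dccOn_with_bot h E hEmem hEdesc
  refine ⟨max N₁ N₂, fun n hn => ?_⟩
  have hn1 : N₁ ≤ n := le_trans (le_max_left _ _) hn
  have hn2 : N₂ ≤ n := le_trans (le_max_right _ _) hn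
  have hDeq : D n = D (max N₁ N₂) := by
    rw [hN₁ n hn1, hN₁ (max N₁ N₂) (le_max_left _ _)]
  have hEeq : E n = E (max N₁ N₂) := by
    rw [hN₂ n hn2, hN₂ (max N₁ N₂) (le_max_right _ _)]
  refine le_antisymm (hanti hn) ?_
  intro x hx
  have hxz : w₀ * x ∈ D n := by
    rw [hDeq]
    exact AddSubgroup.mem_map_of_mem _ hx
  obtain ⟨u, hu, huz⟩ := AddSubgroup.mem_map.mp hxz
  have huz' : w₀ * u = w₀ * x := huz
  have hxu : x - u ∈ E n := by
    rw [hEeq]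
    refine AddSubgroup.mem_inf.mpr ⟨sub_mem hx (hanti hn hu), mem_lker.mpr ?_⟩
    rw [mul_sub, huz', sub_self]
  have : (x - u) + u ∈ L n := add_mem (AddSubgroup.mem_inf.mp hxu).1 hu
  simpa using this

end Helpers

/-- Suppose `APOG(R) ≠ ∅`.  Then `R` is left and right Artinian iff the
vertex set of `APOG(R)` has DCC both on its members that are left ideals and on its
members that are right ideals. -/
theorem artinian_iff_vertexSet_dcc (R : Type*) [Ring R]
    (hne : ∃ A : AddSubgroup R, APOGVertex R A) :
    (DCCOn R {J | IsLeftIdeal R J} ∧ DCCOn R {J | IsRightIdeal R J}) ↔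
      (DCCOn R {A | APOGVertex R A ∧ IsLeftIdeal R A} ∧
        DCCOn R {A | APOGVertex R A ∧ IsRightIdeal R A}) := by
  constructor
  · rintro ⟨hl, hr⟩
    exact ⟨fun f hf hd => hl f (fun n => (hf n).2) hd,
      fun f hf hd => hr f (fun n => (hf n).2) hd⟩
  · rintro ⟨hvl, hvr⟩
    have key : ∀ X Y : AddSubgroup R, X ∈ IPO R → Y ∈ IPO R → X ≠ ⊥ → Y ≠ ⊥ →
        X * Y = ⊥ →
        DCCOn R {J | IsLeftIdeal R J} ∧ DCCOn R {J | IsRightIdeal R J} := by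
      intro X Y hXipo hYipo hXne hYne hXY
      obtain ⟨z₀, hz₀X, hz₀⟩ := exists_ne_zero_of_ne_bot hXne
      obtain ⟨w₀, hw₀Y, hw₀⟩ := exists_ne_zero_of_ne_bot hYne
      have hzero : ∀ x ∈ X, ∀ y ∈ Y, x * y = 0 := fun x hx y hy =>
        AddSubgroup.mem_bot.mp (hXY ▸ my_mul_mem_mul hx hy)
      exact ⟨left_dcc_of_vertex_dcc hz₀ hYipo hYne (fun y hy => hzero _ hz₀X y hy) hvl,
        right_dcc_of_vertex_dcc hw₀ hXipo hXne (fun x hx => hzero x hx _ hw₀Y) hvr⟩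
    obtain ⟨A, hAipo, hAne, B, hBipo, hBne, hAB | hBA⟩ := hne
    · exact key A B hAipo hBipo hAne hBne hAB
    · exact key B A hBipo hAipo hBne hAne hBA
end

section
/- Let R be a ring with identity such that A·A ≠ 0 for every nonzero A ∈ IPO(R) and A^l(IPO(R)) ∩ A^r(IPO(R)) ≠ ∅. Then APOG(R) is not a tournament; that is, there exist distinct vertices A and B of APOG(R) such that either both AB = 0 and BA = 0, or both AB ≠ 0 and BA ≠ 0. -/
open scoped Pointwise

/-- `A^l(IPO(R))`. -/
def AleftIPO (R : Type*) [Ring R] : Set (AddSubgroup R) :=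
  {A | APOGVertex R A ∧ ∃ B, APOGVertex R B ∧ B * A = ⊥}

/-- `A^r(IPO(R))`. -/
def ArightIPO (R : Type*) [Ring R] : Set (AddSubgroup R) :=
  {A | APOGVertex R A ∧ ∃ B, APOGVertex R B ∧ A * B = ⊥}

section Aux

variable {R : Type*} [Ring R]

private lemma tASm_inj : Function.Injective (AddSubgroup.toAddSubmonoid (G := R)) :=
  fun A B h => by ext x; exact SetLike.ext_iff.mp h x

private lemma bot_tASm : (⊥ : AddSubgroup R).toAddSubmonoid = ⊥ := by
  ext x; simp [AddSubgroup.mem_bot, AddSubmonoid.mem_bot]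

private lemma mul_assoc' (A B C : AddSubgroup R) : A * B * C = A * (B * C) := by
  apply tASm_inj
  simp only [AddSubgroup.mul_toAddSubmonoid]
  exact mul_assoc _ _ _

private lemma bot_mul' (A : AddSubgroup R) : (⊥ : AddSubgroup R) * A = ⊥ := by
  apply tASm_inj
  simp only [AddSubgroup.mul_toAddSubmonoid, bot_tASm]
  exact AddSubmonoid.bot_mul _

private lemma mul_bot' (A : AddSubgroup R) : A * (⊥ : AddSubgroup R) = ⊥ := by
  apply tASm_inj
  simp only [AddSubgroup.mul_toAddSubmonoid, bot_tASm]
  exact AddSubmonoid.mul_bot _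

private lemma mul_mem_mul' {A B : AddSubgroup R} {a b : R} (ha : a ∈ A) (hb : b ∈ B) :
    a * b ∈ A * B :=
  AddSubmonoid.mul_mem_mul ha hb

private lemma left_mul {I : AddSubgroup R} (hI : IsLeftIdeal R I) (X : AddSubgroup R) :
    IsLeftIdeal R (I * X) := by
  intro r x hx
  have hx' : x ∈ I.toAddSubmonoid * X.toAddSubmonoid := hx
  refine AddSubmonoid.mul_induction_on (C := fun y => r * y ∈ I * X) hx' ?_ ?_
  · intro i hi a ha
    rw [← mul_assoc]
    exact mul_mem_mul' (hI r i hi) ha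
  · intro a b ha hb
    rw [mul_add]
    exact add_mem ha hb

private lemma mul_right {J : AddSubgroup R} (hJ : IsRightIdeal R J) (X : AddSubgroup R) :
    IsRightIdeal R (X * J) := by
  intro r x hx
  have hx' : x ∈ X.toAddSubmonoid * J.toAddSubmonoid := hx
  refine AddSubmonoid.mul_induction_on (C := fun y => y * r ∈ X * J) hx' ?_ ?_
  · intro a ha j hj
    rw [mul_assoc]
    exact mul_mem_mul' ha (hJ r j hj)
  · intro a b ha hb
    rw [add_mul]
    exact add_mem ha hb

private lemma IPO_mul {A B : AddSubgroup R} (hA : A ∈ IPO R) (hB : B ∈ IPO R) :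
    A * B ∈ IPO R := by
  obtain ⟨I, J, hI, hJ, rfl⟩ := hA
  obtain ⟨K, L, hK, hL, rfl⟩ := hB
  rcases hJ with hJl | hJr
  · exact ⟨I, J * (K * L), hI, Or.inl (left_mul hJl _), by
      rw [mul_assoc' I J (K * L)]⟩
  · rcases hK with hKl | hKr
    · exact ⟨I * J, K * L, Or.inr (mul_right hJr I), Or.inl (left_mul hKl L), rfl⟩
    · exact ⟨I * J * K, L, Or.inr (mul_right hKr (I * J)), hL, by
        rw [mul_assoc' (I * J) K L]⟩

end Aux

/-- If `A*A ≠ 0` for every nonzero `A ∈ IPO(R)` and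
`A^l(IPO(R)) ∩ A^r(IPO(R)) ≠ ∅`, then `APOG(R)` is not a tournament: there are distinct
vertices `A, B` with either both `A*B = 0` and `B*A = 0`, or both `A*B ≠ 0` and
`B*A ≠ 0`. -/
theorem APOG_not_tournament (R : Type*) [Ring R]
    (h1 : ∀ A ∈ IPO R, A ≠ ⊥ → A * A ≠ ⊥)
    (h2 : (AleftIPO R ∩ ArightIPO R).Nonempty) :
    ∃ A B : AddSubgroup R, APOGVertex R A ∧ APOGVertex R B ∧ A ≠ B ∧
      ((A * B = ⊥ ∧ B * A = ⊥) ∨ (A * B ≠ ⊥ ∧ B * A ≠ ⊥)) := by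
  obtain ⟨X, ⟨hXv, Bl, hBlv, hBlX⟩, ⟨_, Br, hBrv, hXBr⟩⟩ := h2
  by_cases h : Br * Bl = ⊥
  · by_cases h' : Bl * Br = ⊥
    · refine ⟨Bl, Br, hBlv, hBrv, ?_, Or.inl ⟨h', h⟩⟩
      intro e
      exact h1 Bl hBlv.1 hBlv.2.1 (by rw [e] at h' ⊢; exact h')
    · exfalso
      apply h1 _ (IPO_mul hBlv.1 hBrv.1) h'
      rw [mul_assoc' Bl Br (Bl * Br), ← mul_assoc' Br Bl Br, h, bot_mul', mul_bot']
  · have hXD : X * (Br * Bl) = ⊥ := by rw [← mul_assoc', hXBr, bot_mul']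
    have hDX : (Br * Bl) * X = ⊥ := by rw [mul_assoc', hBlX, mul_bot']
    have hDv : APOGVertex R (Br * Bl) :=
      ⟨IPO_mul hBrv.1 hBlv.1, h, X, hXv.1, hXv.2.1, Or.inr hXD⟩
    have hne : X ≠ Br * Bl := by
      intro e
      apply h1 X hXv.1 hXv.2.1
      rw [← e] at hXD; exact hXD
    exact ⟨X, Br * Bl, hXv, hDv, hne, Or.inl ⟨hXD, hDX⟩⟩
end
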